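/- arXiv:2503.00403 — 5 statements merged into one kernel-verified Lean document; each statement's English description precedes it below -/
import Mathlib

section
/- There exists a constant C > 0 such that for all integers n ≥ 2, the supremum over x ∈ [0,1] of |M_n e₁(x) - x| is at most C/n, where e₁(x) = x. -/
open MeasureTheory Filter

/-- The common weight `(2n²/(n(n-1))) x(1-x)` appearing in the Moran operator. -/
noncomputable def moranW (n : ℕ) (x : ℝ) : ℝ :=
  (2 * (n : ℝ) ^ 2 / ((n : ℝ) * ((n : ℝ) - 1))) * x * (1 - x)

/-- The Moran operator on the middle interval `[1/n, (n-1)/n]`. -/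
noncomputable def moranCore (n : ℕ) (f : ℝ → ℝ) (x : ℝ) : ℝ :=
  moranW n x * (f (x - 1 / (n : ℝ)) + f (x + 1 / (n : ℝ))) + (1 - 2 * moranW n x) * f x

/-- The Moran operator `M_n` on `C([0,1])`, extended constantly on `[0,1/n)` and `((n-1)/n,1]`. -/
noncomputable def moran (n : ℕ) (f : ℝ → ℝ) (x : ℝ) : ℝ :=
  if x < 1 / (n : ℝ) then moranCore n f (1 / (n : ℝ))
  else if ((n : ℝ) - 1) / (n : ℝ) < x then moranCore n f (((n : ℝ) - 1) / (n : ℝ))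
  else moranCore n f x

lemma moranCore_id (n : ℕ) (x : ℝ) : moranCore n (fun y => y) x = x := by
  simp only [moranCore]; ring

theorem moran_id_rate :
    ∃ C > (0 : ℝ), ∀ n : ℕ, 2 ≤ n → ∀ x ∈ Set.Icc (0 : ℝ) 1,
      |moran n (fun y => y) x - x| ≤ C / (n : ℝ) := by
  refine ⟨1, one_pos, fun n hn x hx => ?_⟩
  have hn0 : (0 : ℝ) < (n : ℝ) := by positivity
  obtain ⟨hx0, hx1⟩ := hx
  unfold moran
  split_ifs with h1 h2
  · rw [moranCore_id, abs_of_nonneg (by linarith [h1.le]), one_div]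
    have : 1 / (n : ℝ) - x ≤ 1 / n := by linarith
    simpa using this
  · rw [moranCore_id, abs_of_nonpos (by linarith [h2.le])]
    have : ((n : ℝ) - 1) / n = 1 - 1 / n := by field_simp
    rw [this]; linarith
  · rw [moranCore_id]; simp [le_of_lt (by positivity : (0:ℝ) < 1 / n)]
end

section
/- For every continuous function f : [0,1] → ℝ, the sequence of functions M_n f converges uniformly on [0,1] to f as n → ∞, i.e. lim_{n→∞} sup_{x ∈ [0,1]} |M_n f(x) − f(x)| = 0. -/
open MeasureTheory Filter

lemma moranW_mem {n : ℕ} (hn : 2 ≤ n) {y : ℝ}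
    (hy : y ∈ Set.Icc (1/(n:ℝ)) (((n:ℝ)-1)/(n:ℝ))) :
    moranW n y ∈ Set.Icc (0:ℝ) 1 := by
  have hn2 : (2:ℝ) ≤ n := by exact_mod_cast hn
  have hn0 : (0:ℝ) < n := by linarith
  have hn1 : (0:ℝ) < (n:ℝ) - 1 := by linarith
  obtain ⟨h1, h2⟩ := hy
  have hy0 : 0 ≤ y := le_trans (by positivity) h1
  have hy1 : y ≤ 1 := h2.trans (by rw [div_le_one hn0]; linarith)
  have heq : moranW n y = 2 * (n:ℝ)^2 * (y * (1 - y)) / ((n:ℝ) * ((n:ℝ) - 1)) := by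
    unfold moranW; ring
  constructor
  · rw [heq]
    have h1y : 0 ≤ 1 - y := by linarith
    positivity
  · rw [heq, div_le_one (by positivity)]
    nlinarith [mul_nonneg (sq_nonneg (n:ℝ)) (sq_nonneg (y - 1/2)),
      mul_nonneg hn0.le (by linarith : (0:ℝ) ≤ (n:ℝ) - 2)]

lemma moranCore_close (f : ℝ → ℝ) {n : ℕ} (hn : 2 ≤ n) {ε δ : ℝ}
    (hδn : 1/(n:ℝ) < δ)
    (hδ : ∀ a ∈ Set.Icc (0:ℝ) 1, ∀ b ∈ Set.Icc (0:ℝ) 1, |a - b| < δ → |f a - f b| < ε)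
    {y : ℝ} (hy : y ∈ Set.Icc (1/(n:ℝ)) (((n:ℝ)-1)/(n:ℝ))) :
    |moranCore n f y - f y| < 2 * ε := by
  have hn2 : (2:ℝ) ≤ n := by exact_mod_cast hn
  have hn0 : (0:ℝ) < n := by linarith
  obtain ⟨h1, h2⟩ := hy
  have hinv : (0:ℝ) < 1/(n:ℝ) := by positivity
  have hy0 : 0 ≤ y := le_trans hinv.le h1
  have hy1 : y ≤ 1 := h2.trans (by rw [div_le_one hn0]; linarith)
  have hsum : ((n:ℝ)-1)/(n:ℝ) + 1/(n:ℝ) = 1 := by field_simp; ring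
  have hmem : y ∈ Set.Icc (0:ℝ) 1 := ⟨hy0, hy1⟩
  have hm1 : y - 1/(n:ℝ) ∈ Set.Icc (0:ℝ) 1 := ⟨by linarith, by linarith⟩
  have hm2 : y + 1/(n:ℝ) ∈ Set.Icc (0:ℝ) 1 := ⟨by linarith, by linarith⟩
  have hd1 : |f (y - 1/(n:ℝ)) - f y| < ε := by
    apply hδ _ hm1 _ hmem
    rw [show y - 1/(n:ℝ) - y = -(1/(n:ℝ)) by ring, abs_neg, abs_of_pos hinv]; exact hδn
  have hd2 : |f (y + 1/(n:ℝ)) - f y| < ε := by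
    apply hδ _ hm2 _ hmem
    rw [show y + 1/(n:ℝ) - y = 1/(n:ℝ) by ring, abs_of_pos hinv]; exact hδn
  have heq : moranCore n f y - f y =
      moranW n y * ((f (y - 1/(n:ℝ)) - f y) + (f (y + 1/(n:ℝ)) - f y)) := by
    unfold moranCore; ring
  obtain ⟨hw0, hw1⟩ := moranW_mem hn ⟨h1, h2⟩
  rw [heq, abs_mul, abs_of_nonneg hw0]
  calc moranW n y * |(f (y - 1/(n:ℝ)) - f y) + (f (y + 1/(n:ℝ)) - f y)|
      ≤ 1 * |(f (y - 1/(n:ℝ)) - f y) + (f (y + 1/(n:ℝ)) - f y)| := by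
        apply mul_le_mul_of_nonneg_right hw1 (abs_nonneg _)
    _ ≤ |f (y - 1/(n:ℝ)) - f y| + |f (y + 1/(n:ℝ)) - f y| := by
        rw [one_mul]; exact abs_add_le _ _
    _ < 2 * ε := by linarith

theorem moran_uniform_approx (f : ℝ → ℝ) (hf : ContinuousOn f (Set.Icc 0 1)) :
    TendstoUniformlyOn (fun n => moran n f) f atTop (Set.Icc (0 : ℝ) 1) := by
  rw [Metric.tendstoUniformlyOn_iff]
  intro ε hε
  have huc : UniformContinuousOn f (Set.Icc 0 1) :=
    isCompact_Icc.uniformContinuousOn_of_continuous hf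
  rw [Metric.uniformContinuousOn_iff] at huc
  obtain ⟨δ, hδ0, hδ⟩ := huc (ε/3) (by linarith)
  simp only [Real.dist_eq] at hδ ⊢
  have h1 : ∀ᶠ n : ℕ in atTop, 1/(n:ℝ) < δ :=
    (tendsto_one_div_atTop_nhds_zero_nat).eventually (gt_mem_nhds hδ0)
  filter_upwards [h1, eventually_ge_atTop 2] with n hδn hn x hx
  have hδ' : ∀ a ∈ Set.Icc (0:ℝ) 1, ∀ b ∈ Set.Icc (0:ℝ) 1, |a - b| < δ → |f a - f b| < ε/3 := by
    intro a ha b hb hab; exact hδ a ha b hb hab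
  have hn2 : (2:ℝ) ≤ n := by exact_mod_cast hn
  have hn0 : (0:ℝ) < n := by linarith
  have hinv : (0:ℝ) < 1/(n:ℝ) := by positivity
  have hmid : 1/(n:ℝ) ≤ ((n:ℝ)-1)/(n:ℝ) := by
    rw [div_le_div_iff₀ hn0 hn0]; nlinarith
  have hb1 : ((n:ℝ)-1)/(n:ℝ) ≤ 1 := by rw [div_le_one hn0]; linarith
  obtain ⟨hx0, hx1⟩ := hx
  unfold moran
  split_ifs with hc1 hc2
  · -- x < 1/n, y = 1/n
    have hcore := moranCore_close f hn hδn hδ'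
      (y := 1/(n:ℝ)) ⟨le_refl _, hmid⟩
    have hfy : |f (1/(n:ℝ)) - f x| < ε/3 := by
      apply hδ' _ ⟨hinv.le, by linarith⟩ _ ⟨hx0, hx1⟩
      rw [abs_of_nonneg (by linarith)]; linarith
    calc |f x - moranCore n f (1/(n:ℝ))|
        ≤ |f x - f (1/(n:ℝ))| + |f (1/(n:ℝ)) - moranCore n f (1/(n:ℝ))| := by
          exact abs_sub_le _ _ _
      _ < ε := by
          linarith [abs_sub_comm (f x) (f (1/(n:ℝ))),
            abs_sub_comm (f (1/(n:ℝ))) (moranCore n f (1/(n:ℝ)))]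
  · -- (n-1)/n < x, y = (n-1)/n
    have hcore := moranCore_close f hn hδn hδ'
      (y := ((n:ℝ)-1)/(n:ℝ)) ⟨hmid, le_refl _⟩
    have hfy : |f (((n:ℝ)-1)/(n:ℝ)) - f x| < ε/3 := by
      apply hδ' _ ⟨le_trans hinv.le hmid, hb1⟩ _ ⟨hx0, hx1⟩
      rw [abs_of_nonpos (by linarith)]
      have : ((n:ℝ)-1)/(n:ℝ) + 1/(n:ℝ) = 1 := by field_simp; ring
      linarith
    calc |f x - moranCore n f (((n:ℝ)-1)/(n:ℝ))|
        ≤ |f x - f (((n:ℝ)-1)/(n:ℝ))| + |f (((n:ℝ)-1)/(n:ℝ)) - moranCore n f (((n:ℝ)-1)/(n:ℝ))| :=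
          abs_sub_le _ _ _
      _ < ε := by
          linarith [abs_sub_comm (f x) (f (((n:ℝ)-1)/(n:ℝ))),
            abs_sub_comm (f (((n:ℝ)-1)/(n:ℝ))) (moranCore n f (((n:ℝ)-1)/(n:ℝ)))]
  · -- middle
    have hcore := moranCore_close f hn hδn hδ'
      (y := x) ⟨not_lt.mp hc1, not_lt.mp hc2⟩
    rw [abs_sub_comm]; linarith
end

section
/- For every f ∈ C³([0,1]) (three times continuously differentiable on [0,1]), every integer n ≥ 2, and every x ∈ [1/n, (n-1)/n], one has |(n(n-1)/4)(M_n f(x) − f(x)) − (1/2) x(1-x) f''(x)| ≤ ‖f'''‖_∞ / (12 n). -/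
open MeasureTheory Filter

section MoranAux
open Set
theorem idw (f : ℝ → ℝ) (hf : ContDiff ℝ 3 f) {a b : ℝ} (hab : a < b) (k : ℕ)
    (hk : (k : WithTop ℕ∞) ≤ 3) {x : ℝ} (hx : x ∈ Set.Icc a b) :
    iteratedDerivWithin k f (Set.Icc a b) x = iteratedDeriv k f x := by
  rw [iteratedDerivWithin, iteratedDeriv]
  congr 1
  have h := ((hf.contDiffOn (s := univ)).ftaylorSeriesWithin uniqueDiffOn_univ).mono
    (subset_univ (Set.Icc a b))
  rw [← h.eq_iteratedFDerivWithin_of_uniqueDiffOn hk (uniqueDiffOn_Icc hab) hx,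
    ftaylorSeriesWithin_univ]
  rfl
theorem taylor3 (f : ℝ → ℝ) (hf : ContDiff ℝ 3 f) {a b M : ℝ} (hab : a < b)
    (hM : ∀ y ∈ Set.Icc a b, |iteratedDeriv 3 f y| ≤ M) :
    |f b - f a - (b - a) * deriv f a - (b - a) ^ 2 / 2 * iteratedDeriv 2 f a| ≤
      M * (b - a) ^ 3 / 6 := by
  have ha : a ∈ Set.Icc a b := Set.left_mem_Icc.2 hab.le
  have hdiff : DifferentiableOn ℝ (iteratedDerivWithin 2 f (Set.Icc a b)) (Set.Ioo a b) := by
    refine ((hf.differentiable_iteratedDeriv 2 (by norm_num)).differentiableOn).congr ?_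
    exact fun y hy => idw f hf hab 2 (by norm_num) (Set.Ioo_subset_Icc_self hy)
  obtain ⟨x', hx', h⟩ := taylor_mean_remainder_lagrange (n := 2) hab.ne
    (by rw [Set.uIcc_of_le hab.le]; exact (hf.of_le (by norm_num)).contDiffOn)
    (by rw [Set.uIcc_of_le hab.le, Set.uIoo_of_le hab.le]; exact hdiff)
  rw [Set.uIcc_of_le hab.le] at h
  rw [Set.uIoo_of_le hab.le] at hx'
  rw [taylor_within_apply] at h
  simp only [Finset.sum_range_succ, Finset.sum_range_zero] at h
  rw [idw f hf hab 0 (by norm_num) ha, idw f hf hab 1 (by norm_num) ha,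
    idw f hf hab 2 (by norm_num) ha,
    idw f hf hab 3 (by norm_num) (Set.Ioo_subset_Icc_self hx')] at h
  simp only [iteratedDeriv_zero, iteratedDeriv_one, smul_eq_mul] at h
  norm_num [Nat.factorial] at h
  have hM' := hM x' (Set.Ioo_subset_Icc_self hx')
  have hb3 : (0:ℝ) ≤ (b - a) ^ 3 := pow_nonneg (by linarith) 3
  have : |f b - f a - (b - a) * deriv f a - (b - a) ^ 2 / 2 * iteratedDeriv 2 f a| =
      |iteratedDeriv 3 f x'| * (b - a) ^ 3 / 6 := by
    have e : f b - f a - (b - a) * deriv f a - (b - a) ^ 2 / 2 * iteratedDeriv 2 f a =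
        iteratedDeriv 3 f x' * (b - a) ^ 3 / 6 := by
      linarith [h]
    rw [e, abs_div, abs_mul, abs_pow, abs_of_nonneg (by linarith : (0:ℝ) ≤ b - a)]
    norm_num
  rw [this]
  gcongr

lemma iteratedDeriv_comp_const_sub' (n : ℕ) (f : ℝ → ℝ) (c a : ℝ) :
    iteratedDeriv n (fun t => f (c - t)) a = (-1 : ℝ) ^ n • iteratedDeriv n f (c - a) := by
  have h1 : (fun t : ℝ => f (c - t)) = fun t : ℝ => f (c + (-t)) := by
    funext t; rw [sub_eq_add_neg]
  have h2 := iteratedDeriv_comp_neg n (fun z => f (c + z)) a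
  rw [h1, h2, iteratedDeriv_comp_const_add, sub_eq_add_neg]

end MoranAux

set_option maxHeartbeats 1000000 in
theorem moran_voronovskaya_rate (f : ℝ → ℝ) (hf : ContDiff ℝ 3 f)
    (n : ℕ) (hn : 2 ≤ n) (x : ℝ)
    (hx : x ∈ Set.Icc (1 / (n : ℝ)) (((n : ℝ) - 1) / (n : ℝ))) :
    |((n : ℝ) * ((n : ℝ) - 1) / 4) * (moran n f x - f x)
        - (1 / 2) * x * (1 - x) * iteratedDeriv 2 f x| ≤
      (⨆ y : Set.Icc (0 : ℝ) 1, |iteratedDeriv 3 f y|) / (12 * (n : ℝ)) := by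
  set c : ℝ := (n : ℝ) with hc
  have hc2 : (2 : ℝ) ≤ c := by rw [hc]; exact_mod_cast hn
  have hcpos : (0 : ℝ) < c := by linarith
  have hc1 : (0 : ℝ) < c - 1 := by linarith
  set h : ℝ := 1 / c with hh
  have hhpos : 0 < h := by positivity
  have hx1 : h ≤ x := hx.1
  have hx2 : x ≤ 1 - h := by
    have := hx.2
    rw [sub_div, div_self hcpos.ne'] at this
    exact this
  have hxh0 : 0 ≤ x - h := by linarith
  have hxh1 : x + h ≤ 1 := by linarith
  have hxpos : 0 < x := lt_of_lt_of_le hhpos hx1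
  have hx1m : 0 < 1 - x := by linarith
  -- the sup bound
  set M : ℝ := ⨆ y : Set.Icc (0 : ℝ) 1, |iteratedDeriv 3 f y| with hMdef
  have hbdd : BddAbove (Set.range fun y : Set.Icc (0 : ℝ) 1 => |iteratedDeriv 3 f y|) := by
    have hcomp : IsCompact (Set.Icc (0:ℝ) 1) := isCompact_Icc
    have hcont : ContinuousOn (fun y => |iteratedDeriv 3 f y|) (Set.Icc (0:ℝ) 1) :=
      ((hf.continuous_iteratedDeriv 3 le_rfl).abs).continuousOn
    have := hcomp.bddAbove_image hcont
    rwa [Set.image_eq_range] at this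
  have hMb : ∀ y ∈ Set.Icc (0 : ℝ) 1, |iteratedDeriv 3 f y| ≤ M := fun y hy =>
    le_ciSup hbdd (⟨y, hy⟩ : Set.Icc (0:ℝ) 1)
  have hM0 : 0 ≤ M := le_trans (abs_nonneg _) (hMb 0 (by norm_num))
  -- forward Taylor
  have hab : x < x + h := by linarith
  have T1 : |f (x + h) - f x - (x + h - x) * deriv f x -
      (x + h - x) ^ 2 / 2 * iteratedDeriv 2 f x| ≤ M * (x + h - x) ^ 3 / 6 :=
    taylor3 f hf hab (fun y hy => hMb y ⟨by linarith [hy.1], by linarith [hy.2]⟩)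
  -- backward Taylor via reflection
  set g : ℝ → ℝ := fun t => f (2 * x - t) with hg
  have hgC : ContDiff ℝ 3 g := hf.comp (contDiff_const.sub contDiff_id)
  have T2' : |g (x + h) - g x - (x + h - x) * deriv g x -
      (x + h - x) ^ 2 / 2 * iteratedDeriv 2 g x| ≤ M * (x + h - x) ^ 3 / 6 := by
    refine taylor3 g hgC hab (fun y hy => ?_)
    rw [hg]
    rw [iteratedDeriv_comp_const_sub' 3 f (2*x) y]
    rw [smul_eq_mul, abs_mul]
    norm_num
    exact hMb (2*x - y) ⟨by linarith [hy.2], by linarith [hy.1]⟩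
  have hgx : g x = f x := by rw [hg]; norm_num; ring_nf
  have hgxh : g (x + h) = f (x - h) := by rw [hg]; ring_nf
  have hgd : deriv g x = - deriv f x := by
    have := iteratedDeriv_comp_const_sub' 1 f (2*x) x
    simp only [iteratedDeriv_one, pow_one, smul_eq_mul] at this
    rw [hg, this]
    norm_num
    congr 1; ring
  have hgd2 : iteratedDeriv 2 g x = iteratedDeriv 2 f x := by
    have := iteratedDeriv_comp_const_sub' 2 f (2*x) x
    simp only [smul_eq_mul] at this
    rw [hg, this]
    norm_num
    congr 1; ring
  rw [hgxh, hgx, hgd, hgd2] at T2'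
  -- unfold moran
  have hmor : moran n f x = moranCore n f x := by
    rw [moran, if_neg (not_lt.2 hx.1), if_neg (not_lt.2 hx.2)]
  set u := f (x - h) with hu
  set v := f (x + h) with hv
  set w := f x with hw
  set d := deriv f x with hd
  set s2 := iteratedDeriv 2 f x with hs2
  have hA : |v - w - h * d - h ^ 2 / 2 * s2| ≤ M * h ^ 3 / 6 := by
    simpa using T1
  have hB : |u - w + h * d - h ^ 2 / 2 * s2| ≤ M * h ^ 3 / 6 := by
    have : x + h - x = h := by ring
    rw [this] at T2'
    convert T2' using 2
    ring
  have hcore : moranCore n f x = moranW n x * (u + v) + (1 - 2 * moranW n x) * w := rfl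
  have key : (c * (c - 1) / 4) * (moranCore n f x - w) - (1/2) * x * (1-x) * s2 =
      (c ^ 2 * x * (1 - x) / 2) *
        ((v - w - h * d - h ^ 2 / 2 * s2) + (u - w + h * d - h ^ 2 / 2 * s2)) := by
    have hn0 : (n:ℝ) ≠ 0 := by rw [← hc]; exact hcpos.ne'
    have hn1 : (n:ℝ) - 1 ≠ 0 := by rw [← hc]; exact hc1.ne'
    rw [hcore, moranW, hh, hc]
    field_simp
    ring
  rw [hmor, key]
  have hbound : |(c ^ 2 * x * (1 - x) / 2) *
      ((v - w - h * d - h ^ 2 / 2 * s2) + (u - w + h * d - h ^ 2 / 2 * s2))| ≤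
      (c ^ 2 * x * (1 - x) / 2) * (M * h ^ 3 / 3) := by
    rw [abs_mul, abs_of_nonneg (by positivity : (0:ℝ) ≤ c ^ 2 * x * (1 - x) / 2)]
    have := abs_add_le (v - w - h * d - h ^ 2 / 2 * s2) (u - w + h * d - h ^ 2 / 2 * s2)
    gcongr
    linarith
  refine hbound.trans ?_
  have hx14 : x * (1 - x) ≤ 1 / 4 := by nlinarith [sq_nonneg (1 - 2 * x)]
  have hh3 : h ^ 3 = 1 / c ^ 3 := by rw [hh]; field_simp
  have heq : (c ^ 2 * x * (1 - x) / 2) * (M * (1 / c ^ 3) / 3) = M * (x * (1 - x)) / (6 * c) := by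
    field_simp
    ring
  rw [hh3, heq]
  rw [div_le_div_iff₀ (by positivity) (by positivity)]
  nlinarith [mul_nonneg hM0 hcpos.le, hM0, hx14, hcpos]
end

section
/- Fix an integer n ≥ 2, a positive integer m, and x ∈ [0,1]. Let Z_k(x) be the rescaled Moran Markov chain on [0,1] started at a point of the grid nearest x, with martingale increments bounded as E[|Z_{j+1} − Z_j|^{2m} | Z_j] ≤ (1/2^{2m-1})(4/(n(n-1)))^m. Then for all 0 ≤ k ≤ ℓ, E[|Z_ℓ(x) − Z_k(x)|^{2m}] ≤ C (4(ℓ−k)/(n(n−1)))^m, where C depends only on m (via the Burkholder–Davis–Gundy constant for exponent 2m) and not on n. -/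
open MeasureTheory

/-- Pointwise Young-type bound: for `s, d ≥ 0` and `i ≤ M₂`,
`s^i * d^(M₂+2-i) ≤ s^M₂ * d^2 + d^(M₂+2)`. -/
lemma moran_young_pointwise (M₂ i : ℕ) (hi : i ≤ M₂) (s d : ℝ) (hs : 0 ≤ s) (hd : 0 ≤ d) :
    s ^ i * d ^ (M₂ + 2 - i) ≤ s ^ M₂ * d ^ 2 + d ^ (M₂ + 2) := by
  rcases le_total s d with h | h
  · calc s ^ i * d ^ (M₂ + 2 - i) ≤ d ^ i * d ^ (M₂ + 2 - i) := by gcongr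
      _ = d ^ (M₂ + 2) := by rw [← pow_add]; congr 1; omega
      _ ≤ s ^ M₂ * d ^ 2 + d ^ (M₂ + 2) := le_add_of_nonneg_left (by positivity)
  · calc s ^ i * d ^ (M₂ + 2 - i) = s ^ i * (d ^ (M₂ - i) * d ^ 2) := by
          rw [← pow_add]; congr 2; omega
      _ ≤ s ^ i * (s ^ (M₂ - i) * d ^ 2) := by gcongr
      _ = s ^ M₂ * d ^ 2 := by rw [← mul_assoc, ← pow_add]; congr 2; omega
      _ ≤ s ^ M₂ * d ^ 2 + d ^ (M₂ + 2) := le_add_of_nonneg_right (by positivity)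

/-- `s^M₂ * d^2 ≤ s^(M₂+2) + d^(M₂+2)`. -/
lemma moran_young_pointwise' (M₂ : ℕ) (s d : ℝ) (hs : 0 ≤ s) (hd : 0 ≤ d) :
    s ^ M₂ * d ^ 2 ≤ s ^ (M₂ + 2) + d ^ (M₂ + 2) := by
  rcases le_total s d with h | h
  · calc s ^ M₂ * d ^ 2 ≤ d ^ M₂ * d ^ 2 := by gcongr
      _ = d ^ (M₂ + 2) := by rw [← pow_add]
      _ ≤ s ^ (M₂ + 2) + d ^ (M₂ + 2) := le_add_of_nonneg_left (by positivity)
  · calc s ^ M₂ * d ^ 2 ≤ s ^ M₂ * s ^ 2 := by gcongr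
      _ = s ^ (M₂ + 2) := by rw [← pow_add]
      _ ≤ s ^ (M₂ + 2) + d ^ (M₂ + 2) := le_add_of_nonneg_right (by positivity)

/-- Parametrized Young inequality. -/
lemma moran_young_param (M₂ : ℕ) (c s d : ℝ) (hc : 0 < c) (hs : 0 ≤ s) (hd : 0 ≤ d) :
    s ^ M₂ * d ^ 2 ≤ c ^ 2 * s ^ (M₂ + 2) + (1 / c ^ M₂) * d ^ (M₂ + 2) := by
  have h := moran_young_pointwise' M₂ (c * s) d (by positivity) hd
  have hcM : (0:ℝ) < c ^ M₂ := by positivity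
  rw [mul_pow, mul_pow] at h
  calc s ^ M₂ * d ^ 2 = (c ^ M₂ * s ^ M₂ * d ^ 2) / c ^ M₂ := by field_simp
    _ ≤ (c ^ (M₂ + 2) * s ^ (M₂ + 2) + d ^ (M₂ + 2)) / c ^ M₂ :=
        (div_le_div_iff_of_pos_right hcM).mpr h
    _ = c ^ 2 * s ^ (M₂ + 2) + (1 / c ^ M₂) * d ^ (M₂ + 2) := by field_simp; ring

/-- Final arithmetic step of the induction. -/
lemma moran_final_arith (m₁ : ℕ) (D T Y a : ℝ) (ha : 0 ≤ a) (hD : D = 3 * 4 ^ (m₁ + 1))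
    (hY : 0 ≤ Y) (hYT : Y + D = T) (hT1 : 1 ≤ T) :
    (Y * a) ^ (m₁ + 1) +
      4 ^ (m₁ + 1) * ((1 / T) * (Y * a) ^ (m₁ + 1) + T ^ m₁ * a ^ (m₁ + 1) + a ^ (m₁ + 1))
      ≤ (T * a) ^ (m₁ + 1) := by
  have hDpos : (0:ℝ) < D := by rw [hD]; positivity
  have hYleT : Y ≤ T := by linarith
  have hT0 : (0:ℝ) < T := by linarith
  have hYm : Y ^ m₁ ≤ T ^ m₁ := pow_le_pow_left₀ hY hYleT m₁
  have hA : (0:ℝ) ≤ a ^ (m₁ + 1) := by positivity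
  rw [mul_pow Y a, mul_pow T a]
  have key1 : (1 / T) * (Y ^ (m₁ + 1) * a ^ (m₁ + 1)) ≤ T ^ m₁ * a ^ (m₁ + 1) := by
    rw [pow_succ Y]
    calc (1 / T) * (Y ^ m₁ * Y * a ^ (m₁ + 1)) ≤ (1 / T) * (T ^ m₁ * T * a ^ (m₁ + 1)) := by
          gcongr
      _ = T ^ m₁ * a ^ (m₁ + 1) := by field_simp
  have key2 : a ^ (m₁ + 1) ≤ T ^ m₁ * a ^ (m₁ + 1) :=
    le_mul_of_one_le_left hA (one_le_pow₀ hT1)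
  have key3 : Y ^ (m₁ + 1) * a ^ (m₁ + 1) ≤ T ^ m₁ * Y * a ^ (m₁ + 1) := by
    have h : Y ^ (m₁ + 1) ≤ T ^ m₁ * Y := by rw [pow_succ]; gcongr
    gcongr
  have hfour : (0:ℝ) ≤ 4 ^ (m₁ + 1) := by positivity
  have expand : T ^ (m₁ + 1) * a ^ (m₁ + 1)
      = T ^ m₁ * Y * a ^ (m₁ + 1) + D * (T ^ m₁ * a ^ (m₁ + 1)) := by
    rw [pow_succ, ← hYT]; ring
  have hmain : 4 ^ (m₁ + 1) * ((1 / T) * (Y ^ (m₁ + 1) * a ^ (m₁ + 1))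
        + T ^ m₁ * a ^ (m₁ + 1) + a ^ (m₁ + 1))
      ≤ D * (T ^ m₁ * a ^ (m₁ + 1)) := by
    calc 4 ^ (m₁ + 1) * ((1 / T) * (Y ^ (m₁ + 1) * a ^ (m₁ + 1))
          + T ^ m₁ * a ^ (m₁ + 1) + a ^ (m₁ + 1))
        ≤ 4 ^ (m₁ + 1) * (3 * (T ^ m₁ * a ^ (m₁ + 1))) := by
          apply mul_le_mul_of_nonneg_left _ hfour
          linarith [key1, key2]
      _ = D * (T ^ m₁ * a ^ (m₁ + 1)) := by rw [hD]; ring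
  linarith [hmain, key3, expand]

theorem moran_moment_bound_BDG (m : ℕ) (hm : 0 < m) :
    ∃ C > (0 : ℝ), ∀ (n : ℕ), 2 ≤ n →
      ∀ (Ω : Type) [MeasurableSpace Ω] (μ : Measure Ω), IsProbabilityMeasure μ →
      ∀ (𝒢 : Filtration ℕ ‹MeasurableSpace Ω›) (Z : ℕ → Ω → ℝ),
        Martingale Z 𝒢 μ →
        (∀ k ω, Z k ω ∈ Set.Icc (0 : ℝ) 1) →
        (∀ j, ∀ᵐ ω ∂μ,
          (μ[fun ω' => |Z (j + 1) ω' - Z j ω'| ^ (2 * m)|𝒢 j]) ω ≤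
            (1 / 2 ^ (2 * m - 1)) * (4 / ((n : ℝ) * ((n : ℝ) - 1))) ^ m) →
        ∀ k ℓ : ℕ, k ≤ ℓ →
          ∫ ω, |Z ℓ ω - Z k ω| ^ (2 * m) ∂μ ≤
            C * (4 * ((ℓ : ℝ) - (k : ℝ)) / ((n : ℝ) * ((n : ℝ) - 1))) ^ m := by
  obtain ⟨m₁, rfl⟩ : ∃ m₁, m = m₁ + 1 := ⟨m - 1, by omega⟩
  refine ⟨(3 * 4 ^ (m₁ + 1) : ℝ) ^ (m₁ + 1), by positivity, ?_⟩
  intro n hn Ω mΩ μ hμ 𝒢 Z hmart hZ01 hcond k ℓ hkℓ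
  haveI := hμ
  simp only [show 2 * (m₁ + 1) = 2 * m₁ + 2 from by ring] at hcond ⊢
  set q : ℝ := (n : ℝ) * ((n : ℝ) - 1) with hq_def
  have hn2 : (2:ℝ) ≤ (n:ℝ) := by exact_mod_cast hn
  have hq : 0 < q := by rw [hq_def]; nlinarith
  set a : ℝ := 4 / q with ha_def
  have ha : 0 < a := by rw [ha_def]; positivity
  -- basic facts
  have hmeas : ∀ j, Measurable (Z j) := fun j =>
    ((hmart.stronglyAdapted j).mono (𝒢.le j)).measurable
  have hZb : ∀ j ω, |Z j ω| ≤ 1 := fun j ω =>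
    abs_le.2 ⟨by linarith [(hZ01 j ω).1], (hZ01 j ω).2⟩
  have hdiffb : ∀ i j ω, |Z i ω - Z j ω| ≤ 1 := fun i j ω => by
    have h1 := hZ01 i ω; have h2 := hZ01 j ω
    rw [abs_le]
    constructor
    · linarith [h1.1, h2.2]
    · linarith [h1.2, h2.1]
  have hbint : ∀ f : Ω → ℝ, Measurable f → (∀ ω, |f ω| ≤ 1) → Integrable f μ := by
    intro f hf hb
    refine (integrable_const (1:ℝ)).mono hf.aestronglyMeasurable (ae_of_all _ fun ω => ?_)
    simpa using hb ω
  have hevenM : Even (2 * m₁ + 2) := ⟨m₁ + 1, by ring⟩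
  -- increment moment bound
  have hΔmom : ∀ j, ∫ ω, (Z (j+1) ω - Z j ω) ^ (2 * m₁ + 2) ∂μ ≤ a ^ (m₁ + 1) := by
    intro j
    have h1 : (fun ω => (Z (j+1) ω - Z j ω) ^ (2 * m₁ + 2))
        = fun ω => |Z (j+1) ω - Z j ω| ^ (2 * m₁ + 2) :=
      funext fun ω => (hevenM.pow_abs _).symm
    rw [h1]
    calc ∫ ω, |Z (j+1) ω - Z j ω| ^ (2 * m₁ + 2) ∂μ
        = ∫ ω, (μ[fun ω' => |Z (j + 1) ω' - Z j ω'| ^ (2 * m₁ + 2)|𝒢 j]) ω ∂μ :=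
          (integral_condExp (𝒢.le j)).symm
      _ ≤ ∫ _ω, ((1 / 2 ^ (2 * m₁ + 2 - 1)) * a ^ (m₁ + 1) : ℝ) ∂μ :=
          integral_mono_ae integrable_condExp (integrable_const _) (hcond j)
      _ = (1 / 2 ^ (2 * m₁ + 2 - 1)) * a ^ (m₁ + 1) := by
          simp [measure_univ]
      _ ≤ a ^ (m₁ + 1) := by
          have h2 : (1:ℝ) ≤ 2 ^ (2 * m₁ + 2 - 1) := one_le_pow₀ (by norm_num)
          have h3 : (1:ℝ) / 2 ^ (2 * m₁ + 2 - 1) ≤ 1 := by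
            rw [div_le_one (by positivity)]; exact h2
          exact mul_le_of_le_one_left (pow_nonneg ha.le _) h3
  -- cross terms vanish
  have hcross : ∀ (j p : ℕ), k ≤ j →
      ∫ ω, (Z j ω - Z k ω) ^ p * (Z (j+1) ω - Z j ω) ∂μ = 0 := by
    intro j p hkj
    have hgSM : StronglyMeasurable[𝒢 j] (fun ω => (Z j ω - Z k ω) ^ p) :=
      ((hmart.stronglyAdapted j).sub ((hmart.stronglyAdapted k).mono (𝒢.mono hkj))).pow _
    have hg_meas : Measurable fun ω => (Z j ω - Z k ω) ^ p :=
      ((hmeas j).sub (hmeas k)).pow_const p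
    have hb1 : ∀ ω, |(Z j ω - Z k ω) ^ p| ≤ 1 := fun ω => by
      rw [abs_pow]; exact pow_le_one₀ (abs_nonneg _) (hdiffb _ _ ω)
    have hint1 : Integrable (fun ω => (Z j ω - Z k ω) ^ p * Z (j+1) ω) μ :=
      hbint _ (hg_meas.mul (hmeas _)) (fun ω => by
        rw [abs_mul]; exact mul_le_one₀ (hb1 ω) (abs_nonneg _) (hZb _ ω))
    have hint2 : Integrable (fun ω => (Z j ω - Z k ω) ^ p * Z j ω) μ :=
      hbint _ (hg_meas.mul (hmeas _)) (fun ω => by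
        rw [abs_mul]; exact mul_le_one₀ (hb1 ω) (abs_nonneg _) (hZb _ ω))
    have e1 : ∫ ω, (Z j ω - Z k ω) ^ p * Z (j+1) ω ∂μ
        = ∫ ω, (Z j ω - Z k ω) ^ p * Z j ω ∂μ := by
      have hmul : μ[(fun ω => (Z j ω - Z k ω) ^ p) * Z (j+1)|𝒢 j]
          =ᵐ[μ] (fun ω => (Z j ω - Z k ω) ^ p) * μ[Z (j+1)|𝒢 j] :=
        condExp_mul_of_stronglyMeasurable_left hgSM hint1 (hmart.integrable (j+1))
      calc ∫ ω, (Z j ω - Z k ω) ^ p * Z (j+1) ω ∂μ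
          = ∫ ω, (μ[(fun ω => (Z j ω - Z k ω) ^ p) * Z (j+1)|𝒢 j]) ω ∂μ :=
            (integral_condExp (𝒢.le j)).symm
        _ = ∫ ω, (Z j ω - Z k ω) ^ p * Z j ω ∂μ := by
            refine integral_congr_ae ?_
            filter_upwards [hmul, hmart.condExp_ae_eq (Nat.le_succ j)] with ω h1 h2
            simp only [Pi.mul_apply] at h1 h2 ⊢
            rw [h1, h2]
    have e2 : ∀ ω, (Z j ω - Z k ω) ^ p * (Z (j+1) ω - Z j ω)
        = (Z j ω - Z k ω) ^ p * Z (j+1) ω - (Z j ω - Z k ω) ^ p * Z j ω := fun ω => by ring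
    rw [integral_congr_ae (ae_of_all _ e2), integral_sub hint1 hint2, e1, sub_self]
  -- the main induction
  set D : ℝ := 3 * 4 ^ (m₁ + 1) with hD_def
  have hD1 : (1:ℝ) ≤ D := by
    rw [hD_def]
    have h4 : (1:ℝ) ≤ 4 ^ (m₁ + 1) := one_le_pow₀ (by norm_num)
    linarith
  have key : ∀ t : ℕ, ∫ ω, (Z (k+t) ω - Z k ω) ^ (2 * m₁ + 2) ∂μ
      ≤ (D * t * a) ^ (m₁ + 1) := by
    intro t
    induction t with
    | zero =>
      simp only [Nat.add_zero, sub_self, Nat.cast_zero, mul_zero, zero_mul]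
      rw [zero_pow (by omega : 2 * m₁ + 2 ≠ 0), zero_pow (by omega : m₁ + 1 ≠ 0)]
      simp
    | succ t ih =>
      rw [show k + (t+1) = (k + t) + 1 from rfl]
      set j := k + t with hj_def
      set S : Ω → ℝ := fun ω => Z j ω - Z k ω with hS_def
      set Δ : Ω → ℝ := fun ω => Z (j+1) ω - Z j ω with hΔ_def
      have hSb : ∀ ω, |S ω| ≤ 1 := fun ω => hdiffb _ _ ω
      have hΔb : ∀ ω, |Δ ω| ≤ 1 := fun ω => hdiffb _ _ ω
      have hSmeas : Measurable S := (hmeas j).sub (hmeas k)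
      have hΔmeas : Measurable Δ := (hmeas (j+1)).sub (hmeas j)
      have hintSD : ∀ (i r : ℕ), Integrable (fun ω => S ω ^ i * Δ ω ^ r) μ := fun i r =>
        hbint _ ((hSmeas.pow_const i).mul (hΔmeas.pow_const r)) (fun ω => by
          rw [abs_mul, abs_pow, abs_pow]
          exact mul_le_one₀ (pow_le_one₀ (abs_nonneg _) (hSb ω)) (by positivity)
            (pow_le_one₀ (abs_nonneg _) (hΔb ω)))
      -- binomial expansion
      have expand : ∀ ω, (Z (j+1) ω - Z k ω) ^ (2 * m₁ + 2)
          = ∑ i ∈ Finset.range (2 * m₁ + 2 + 1),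
              S ω ^ i * Δ ω ^ (2 * m₁ + 2 - i) * ((2 * m₁ + 2).choose i : ℝ) := by
        intro ω
        have h : Z (j+1) ω - Z k ω = S ω + Δ ω := by rw [hS_def, hΔ_def]; ring
        rw [h, add_pow]
      have hint_g : ∀ i, Integrable
          (fun ω => S ω ^ i * Δ ω ^ (2 * m₁ + 2 - i) * ((2 * m₁ + 2).choose i : ℝ)) μ :=
        fun i => (hintSD _ _).mul_const _
      have step1 : ∫ ω, (Z (j+1) ω - Z k ω) ^ (2 * m₁ + 2) ∂μ
          = ∑ i ∈ Finset.range (2 * m₁ + 2 + 1),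
              ∫ ω, S ω ^ i * Δ ω ^ (2 * m₁ + 2 - i) * ((2 * m₁ + 2).choose i : ℝ) ∂μ := by
        rw [integral_congr_ae (ae_of_all _ expand)]
        exact integral_finset_sum _ (fun i _ => hint_g i)
      -- the three pieces
      have top : ∫ ω, S ω ^ (2 * m₁ + 2) * Δ ω ^ (2 * m₁ + 2 - (2 * m₁ + 2))
            * ((2 * m₁ + 2).choose (2 * m₁ + 2) : ℝ) ∂μ
          = ∫ ω, S ω ^ (2 * m₁ + 2) ∂μ := by
        simp [Nat.sub_self]
      have crossterm : ∫ ω, S ω ^ (2 * m₁ + 1) * Δ ω ^ (2 * m₁ + 2 - (2 * m₁ + 1))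
            * ((2 * m₁ + 2).choose (2 * m₁ + 1) : ℝ) ∂μ = 0 := by
        rw [show 2 * m₁ + 2 - (2 * m₁ + 1) = 1 from by omega]
        simp only [pow_one]
        rw [integral_mul_const]
        have h0 : ∫ ω, S ω ^ (2 * m₁ + 1) * Δ ω ∂μ = 0 := by
          rw [hS_def, hΔ_def]
          exact hcross j (2 * m₁ + 1) (Nat.le_add_right k t)
        rw [h0, zero_mul]
      -- lower-order terms
      have hintS2 : Integrable (fun ω => |S ω| ^ (2 * m₁) * Δ ω ^ 2) μ :=
        hbint _ ((hSmeas.abs.pow_const _).mul (hΔmeas.pow_const 2)) (fun ω => by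
          rw [abs_mul, abs_pow, abs_pow, abs_abs]
          exact mul_le_one₀ (pow_le_one₀ (abs_nonneg _) (hSb ω)) (by positivity)
            (pow_le_one₀ (abs_nonneg _) (hΔb ω)))
      have hintΔM : Integrable (fun ω => Δ ω ^ (2 * m₁ + 2)) μ :=
        hbint _ (hΔmeas.pow_const _) (fun ω => by
          rw [abs_pow]; exact pow_le_one₀ (abs_nonneg _) (hΔb ω))
      have hintS : Integrable (fun ω => S ω ^ (2 * m₁ + 2)) μ :=
        hbint _ (hSmeas.pow_const _) (fun ω => by
          rw [abs_pow]; exact pow_le_one₀ (abs_nonneg _) (hSb ω))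
      have hint_h : Integrable (fun ω => |S ω| ^ (2 * m₁) * Δ ω ^ 2 + Δ ω ^ (2 * m₁ + 2)) μ :=
        hintS2.add hintΔM
      have hIb : ∀ i ∈ Finset.range (2 * m₁ + 1),
          ∫ ω, S ω ^ i * Δ ω ^ (2 * m₁ + 2 - i) * ((2 * m₁ + 2).choose i : ℝ) ∂μ
          ≤ ((2 * m₁ + 2).choose i : ℝ)
            * ∫ ω, |S ω| ^ (2 * m₁) * Δ ω ^ 2 + Δ ω ^ (2 * m₁ + 2) ∂μ := by
        intro i hi
        have hi' : i ≤ 2 * m₁ := by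
          have := Finset.mem_range.mp hi; omega
        have hpt : ∀ ω, S ω ^ i * Δ ω ^ (2 * m₁ + 2 - i)
            ≤ |S ω| ^ (2 * m₁) * Δ ω ^ 2 + Δ ω ^ (2 * m₁ + 2) := by
          intro ω
          calc S ω ^ i * Δ ω ^ (2 * m₁ + 2 - i)
              ≤ |S ω| ^ i * |Δ ω| ^ (2 * m₁ + 2 - i) := by
                refine (le_abs_self _).trans (le_of_eq ?_)
                rw [abs_mul, abs_pow, abs_pow]
            _ ≤ |S ω| ^ (2 * m₁) * |Δ ω| ^ 2 + |Δ ω| ^ (2 * m₁ + 2) :=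
                moran_young_pointwise (2 * m₁) i hi' _ _ (abs_nonneg _) (abs_nonneg _)
            _ = |S ω| ^ (2 * m₁) * Δ ω ^ 2 + Δ ω ^ (2 * m₁ + 2) := by
                rw [sq_abs, hevenM.pow_abs]
        rw [integral_mul_const, mul_comm]
        apply mul_le_mul_of_nonneg_left _ (Nat.cast_nonneg _)
        exact integral_mono_ae (hintSD _ _) hint_h (ae_of_all _ hpt)
      have hh0 : 0 ≤ ∫ ω, |S ω| ^ (2 * m₁) * Δ ω ^ 2 + Δ ω ^ (2 * m₁ + 2) ∂μ := by
        apply integral_nonneg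
        intro ω
        have h1 : (0:ℝ) ≤ |S ω| ^ (2 * m₁) * Δ ω ^ 2 := by positivity
        have h2 : (0:ℝ) ≤ Δ ω ^ (2 * m₁ + 2) := hevenM.pow_nonneg _
        simpa using add_nonneg h1 h2
      have hsum : ∑ i ∈ Finset.range (2 * m₁ + 1),
          ∫ ω, S ω ^ i * Δ ω ^ (2 * m₁ + 2 - i) * ((2 * m₁ + 2).choose i : ℝ) ∂μ
          ≤ 4 ^ (m₁ + 1) * ∫ ω, |S ω| ^ (2 * m₁) * Δ ω ^ 2 + Δ ω ^ (2 * m₁ + 2) ∂μ := by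
        calc ∑ i ∈ Finset.range (2 * m₁ + 1),
            ∫ ω, S ω ^ i * Δ ω ^ (2 * m₁ + 2 - i) * ((2 * m₁ + 2).choose i : ℝ) ∂μ
            ≤ ∑ i ∈ Finset.range (2 * m₁ + 1), ((2 * m₁ + 2).choose i : ℝ)
              * ∫ ω, |S ω| ^ (2 * m₁) * Δ ω ^ 2 + Δ ω ^ (2 * m₁ + 2) ∂μ :=
              Finset.sum_le_sum hIb
          _ = (∑ i ∈ Finset.range (2 * m₁ + 1), ((2 * m₁ + 2).choose i : ℝ))
              * ∫ ω, |S ω| ^ (2 * m₁) * Δ ω ^ 2 + Δ ω ^ (2 * m₁ + 2) ∂μ := by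
              rw [Finset.sum_mul]
          _ ≤ (4:ℝ) ^ (m₁ + 1) * ∫ ω, |S ω| ^ (2 * m₁) * Δ ω ^ 2 + Δ ω ^ (2 * m₁ + 2) ∂μ := by
              apply mul_le_mul_of_nonneg_right _ hh0
              have hsub : ∑ i ∈ Finset.range (2 * m₁ + 1), (2 * m₁ + 2).choose i
                  ≤ ∑ i ∈ Finset.range (2 * m₁ + 2 + 1), (2 * m₁ + 2).choose i :=
                Finset.sum_le_sum_of_subset (Finset.range_subset_range.2 (by omega))
              rw [Nat.sum_range_choose] at hsub
              have hcast : (∑ i ∈ Finset.range (2 * m₁ + 1), ((2 * m₁ + 2).choose i : ℝ))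
                  ≤ ((2:ℝ) ^ (2 * m₁ + 2)) := by
                push_cast
                exact_mod_cast hsub
              refine hcast.trans (le_of_eq ?_)
              rw [show 2 * m₁ + 2 = 2 * (m₁ + 1) from by ring, pow_mul]
              norm_num
      -- bound on the integral of h via Young with parameter
      have hTpos : (0:ℝ) < D * ((t:ℝ) + 1) := by positivity
      have hT1 : (1:ℝ) ≤ D * ((t:ℝ) + 1) := by nlinarith [Nat.cast_nonneg (α := ℝ) t]
      set c : ℝ := Real.sqrt (1 / (D * ((t:ℝ) + 1))) with hc_def
      have hc : 0 < c := Real.sqrt_pos.2 (by positivity)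
      have hc2 : c ^ 2 = 1 / (D * ((t:ℝ) + 1)) := Real.sq_sqrt (by positivity)
      have hcM : 1 / c ^ (2 * m₁) = (D * ((t:ℝ) + 1)) ^ m₁ := by
        rw [pow_mul, hc2, one_div, one_div, inv_pow, inv_inv]
      have hS2bound : ∫ ω, |S ω| ^ (2 * m₁) * Δ ω ^ 2 ∂μ
          ≤ c ^ 2 * ∫ ω, S ω ^ (2 * m₁ + 2) ∂μ
            + (1 / c ^ (2 * m₁)) * ∫ ω, Δ ω ^ (2 * m₁ + 2) ∂μ := by
        have hpt : ∀ ω, |S ω| ^ (2 * m₁) * Δ ω ^ 2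
            ≤ c ^ 2 * S ω ^ (2 * m₁ + 2) + (1 / c ^ (2 * m₁)) * Δ ω ^ (2 * m₁ + 2) := by
          intro ω
          have h := moran_young_param (2 * m₁) c (|S ω|) (|Δ ω|) hc (abs_nonneg _) (abs_nonneg _)
          rw [sq_abs, hevenM.pow_abs, hevenM.pow_abs] at h
          exact h
        calc ∫ ω, |S ω| ^ (2 * m₁) * Δ ω ^ 2 ∂μ
            ≤ ∫ ω, c ^ 2 * S ω ^ (2 * m₁ + 2) + (1 / c ^ (2 * m₁)) * Δ ω ^ (2 * m₁ + 2) ∂μ :=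
              integral_mono_ae hintS2 ((hintS.const_mul _).add (hintΔM.const_mul _))
                (ae_of_all _ hpt)
          _ = c ^ 2 * ∫ ω, S ω ^ (2 * m₁ + 2) ∂μ
              + (1 / c ^ (2 * m₁)) * ∫ ω, Δ ω ^ (2 * m₁ + 2) ∂μ := by
              rw [integral_add (hintS.const_mul _) (hintΔM.const_mul _),
                integral_const_mul, integral_const_mul]
      have ihS : ∫ ω, S ω ^ (2 * m₁ + 2) ∂μ ≤ (D * (t:ℝ) * a) ^ (m₁ + 1) := by
        simpa only [hS_def] using ih
      have hΔj : ∫ ω, Δ ω ^ (2 * m₁ + 2) ∂μ ≤ a ^ (m₁ + 1) := by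
        simpa only [hΔ_def] using hΔmom j
      have h_int_bound : ∫ ω, |S ω| ^ (2 * m₁) * Δ ω ^ 2 + Δ ω ^ (2 * m₁ + 2) ∂μ
          ≤ (1 / (D * ((t:ℝ) + 1))) * (D * (t:ℝ) * a) ^ (m₁ + 1)
            + (D * ((t:ℝ) + 1)) ^ m₁ * a ^ (m₁ + 1) + a ^ (m₁ + 1) := by
        rw [integral_add hintS2 hintΔM]
        have h1 : ∫ ω, |S ω| ^ (2 * m₁) * Δ ω ^ 2 ∂μ
            ≤ (1 / (D * ((t:ℝ) + 1))) * (D * (t:ℝ) * a) ^ (m₁ + 1)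
              + (D * ((t:ℝ) + 1)) ^ m₁ * a ^ (m₁ + 1) := by
          refine hS2bound.trans ?_
          rw [hc2, hcM]
          have hc2' : (0:ℝ) ≤ 1 / (D * ((t:ℝ) + 1)) := by positivity
          have hcM' : (0:ℝ) ≤ (D * ((t:ℝ) + 1)) ^ m₁ := by positivity
          exact add_le_add (mul_le_mul_of_nonneg_left ihS hc2')
            (mul_le_mul_of_nonneg_left hΔj hcM')
        linarith [h1, hΔj]
      -- assemble
      have hfour : (0:ℝ) ≤ 4 ^ (m₁ + 1) := by positivity
      calc ∫ ω, (Z (j+1) ω - Z k ω) ^ (2 * m₁ + 2) ∂μ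
          = ∑ i ∈ Finset.range (2 * m₁ + 2 + 1),
              ∫ ω, S ω ^ i * Δ ω ^ (2 * m₁ + 2 - i) * ((2 * m₁ + 2).choose i : ℝ) ∂μ := step1
        _ = (∑ i ∈ Finset.range (2 * m₁ + 1),
              ∫ ω, S ω ^ i * Δ ω ^ (2 * m₁ + 2 - i) * ((2 * m₁ + 2).choose i : ℝ) ∂μ)
            + (∫ ω, S ω ^ (2 * m₁ + 1) * Δ ω ^ (2 * m₁ + 2 - (2 * m₁ + 1))
                * ((2 * m₁ + 2).choose (2 * m₁ + 1) : ℝ) ∂μ)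
            + (∫ ω, S ω ^ (2 * m₁ + 2) * Δ ω ^ (2 * m₁ + 2 - (2 * m₁ + 2))
                * ((2 * m₁ + 2).choose (2 * m₁ + 2) : ℝ) ∂μ) := by
            rw [Finset.sum_range_succ, Finset.sum_range_succ]
        _ = (∑ i ∈ Finset.range (2 * m₁ + 1),
              ∫ ω, S ω ^ i * Δ ω ^ (2 * m₁ + 2 - i) * ((2 * m₁ + 2).choose i : ℝ) ∂μ)
            + 0 + ∫ ω, S ω ^ (2 * m₁ + 2) ∂μ := by rw [crossterm, top]
        _ ≤ (4 ^ (m₁ + 1) * ∫ ω, |S ω| ^ (2 * m₁) * Δ ω ^ 2 + Δ ω ^ (2 * m₁ + 2) ∂μ)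
            + 0 + (D * (t:ℝ) * a) ^ (m₁ + 1) :=
            add_le_add (add_le_add hsum le_rfl) ihS
        _ ≤ (4 ^ (m₁ + 1) * ((1 / (D * ((t:ℝ) + 1))) * (D * (t:ℝ) * a) ^ (m₁ + 1)
              + (D * ((t:ℝ) + 1)) ^ m₁ * a ^ (m₁ + 1) + a ^ (m₁ + 1)))
            + 0 + (D * (t:ℝ) * a) ^ (m₁ + 1) :=
            add_le_add (add_le_add (mul_le_mul_of_nonneg_left h_int_bound hfour) le_rfl) le_rfl
        _ ≤ (D * ((t+1 : ℕ):ℝ) * a) ^ (m₁ + 1) := by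
            rw [show ((t+1 : ℕ):ℝ) = (t:ℝ) + 1 from by push_cast; ring]
            have harith := moran_final_arith m₁ D (D * ((t:ℝ) + 1)) (D * (t:ℝ)) a ha.le hD_def
              (by positivity) (by ring) hT1
            calc (4 ^ (m₁ + 1) * ((1 / (D * ((t:ℝ) + 1))) * (D * (t:ℝ) * a) ^ (m₁ + 1)
                  + (D * ((t:ℝ) + 1)) ^ m₁ * a ^ (m₁ + 1) + a ^ (m₁ + 1)))
                + 0 + (D * (t:ℝ) * a) ^ (m₁ + 1)
                = (D * (t:ℝ) * a) ^ (m₁ + 1)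
                  + 4 ^ (m₁ + 1) * ((1 / (D * ((t:ℝ) + 1))) * (D * (t:ℝ) * a) ^ (m₁ + 1)
                  + (D * ((t:ℝ) + 1)) ^ m₁ * a ^ (m₁ + 1) + a ^ (m₁ + 1)) := by ring
              _ ≤ ((D * ((t:ℝ) + 1)) * a) ^ (m₁ + 1) := harith
              _ = (D * ((t:ℝ) + 1) * a) ^ (m₁ + 1) := by ring
  -- conclusion
  have hfin := key (ℓ - k)
  rw [show k + (ℓ - k) = ℓ from by omega] at hfin
  have habs : (fun ω => |Z ℓ ω - Z k ω| ^ (2 * m₁ + 2))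
      = fun ω => (Z ℓ ω - Z k ω) ^ (2 * m₁ + 2) :=
    funext fun ω => hevenM.pow_abs _
  rw [habs]
  refine hfin.trans (le_of_eq ?_)
  rw [Nat.cast_sub hkℓ]
  rw [ha_def, hD_def]
  rw [← mul_pow]
  congr 1
  field_simp
end

section
/- For a,b real with 0 ≤ s ≤ t and a piecewise-linear interpolation estimate: if a process satisfies E[|Z_ℓ − Z_k|^{2m}] ≤ C(4(ℓ−k)/(n(n−1)))^m on grid points k ≤ ℓ, then its linear interpolation Z_t := Z_{⌊n(n−1)t/4⌋} + (n(n−1)t/4 − ⌊n(n−1)t/4⌋)(Z_{⌊n(n−1)t/4⌋+1} − Z_{⌊n(n−1)t/4⌋}) satisfies E[|Z_t − Z_s|^{2m}] ≤ C' (t − s)^m for all 0 ≤ s ≤ t, with C' depending only on C and m. -/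
open MeasureTheory

/-- Linear interpolation of a discrete-time process along the Moran time scale. -/
noncomputable def interp {Ω : Type*} (n : ℕ) (Z : ℕ → Ω → ℝ) (t : ℝ) (ω : Ω) : ℝ :=
  Z ⌊(n : ℝ) * ((n : ℝ) - 1) * t / 4⌋₊ ω +
    ((n : ℝ) * ((n : ℝ) - 1) * t / 4 - ⌊(n : ℝ) * ((n : ℝ) - 1) * t / 4⌋₊) *
      (Z (⌊(n : ℝ) * ((n : ℝ) - 1) * t / 4⌋₊ + 1) ω - Z ⌊(n : ℝ) * ((n : ℝ) - 1) * t / 4⌋₊ ω)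

private lemma abs_pow_add_three (p : ℕ) (x y z : ℝ) :
    |x + y + z| ^ p ≤ 3 ^ p * (|x| ^ p + |y| ^ p + |z| ^ p) := by
  have h1 : |x + y + z| ^ p ≤ (|x| + |y| + |z|) ^ p :=
    pow_le_pow_left₀ (abs_nonneg _) (abs_add_three x y z) p
  refine h1.trans ?_
  set u := |x| with hu'
  set v := |y| with hv'
  set w := |z| with hw'
  have hu : 0 ≤ u := abs_nonneg x
  have hv : 0 ≤ v := abs_nonneg y
  have hw : 0 ≤ w := abs_nonneg z
  have hup : 0 ≤ u ^ p := pow_nonneg hu p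
  have hvp : 0 ≤ v ^ p := pow_nonneg hv p
  have hwp : 0 ≤ w ^ p := pow_nonneg hw p
  set M := max u (max v w) with hM
  have hMp : M ^ p ≤ u ^ p + v ^ p + w ^ p := by
    rcases max_choice u (max v w) with h | h
    · rw [hM, h]; linarith
    · rcases max_choice v w with h2 | h2
      · rw [hM, h, h2]; linarith
      · rw [hM, h, h2]; linarith
  have hsum : u + v + w ≤ 3 * M := by
    have h1 := le_max_left u (max v w)
    have h2 := (le_max_left v w).trans (le_max_right u (max v w))
    have h3 := (le_max_right v w).trans (le_max_right u (max v w))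
    linarith
  calc (u + v + w) ^ p ≤ (3 * M) ^ p := pow_le_pow_left₀ (by linarith) hsum p
    _ = 3 ^ p * M ^ p := mul_pow 3 M p
    _ ≤ 3 ^ p * (u ^ p + v ^ p + w ^ p) :=
        mul_le_mul_of_nonneg_left hMp (by positivity)

set_option maxHeartbeats 1000000 in
theorem interp_moment_bound (m : ℕ) (hm : 0 < m) (C : ℝ) (hC : 0 < C) :
    ∃ C' > (0 : ℝ), ∀ (n : ℕ), 2 ≤ n →
      ∀ (Ω : Type) [MeasurableSpace Ω] (μ : Measure Ω), IsProbabilityMeasure μ →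
      ∀ (Z : ℕ → Ω → ℝ), (∀ k, Measurable (Z k)) →
        (∀ k ω, Z k ω ∈ Set.Icc (0 : ℝ) 1) →
        (∀ k ℓ : ℕ, k ≤ ℓ →
          ∫ ω, |Z ℓ ω - Z k ω| ^ (2 * m) ∂μ ≤
            C * (4 * ((ℓ : ℝ) - (k : ℝ)) / ((n : ℝ) * ((n : ℝ) - 1))) ^ m) →
        ∀ s t : ℝ, 0 ≤ s → s ≤ t →
          ∫ ω, |interp n Z t ω - interp n Z s ω| ^ (2 * m) ∂μ ≤ C' * (t - s) ^ m := by
  refine ⟨3 ^ (2 * m + 1) * C, by positivity, ?_⟩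
  intro n hn Ω _ μ hP Z hZm hZ01 hmom s t hs hst
  haveI := hP
  have hn1 : (1 : ℝ) ≤ (n : ℝ) - 1 := by
    have : (2 : ℝ) ≤ (n : ℝ) := by exact_mod_cast hn
    linarith
  set r : ℝ := (n : ℝ) * ((n : ℝ) - 1) with hr
  have hrpos : 0 < r := by
    have hn0 : (0 : ℝ) < (n : ℝ) := by positivity
    rw [hr]; nlinarith
  have hτs0 : 0 ≤ r * s / 4 := by
    apply div_nonneg (mul_nonneg hrpos.le hs); norm_num
  have hτt0 : 0 ≤ r * t / 4 := by
    apply div_nonneg (mul_nonneg hrpos.le (hs.trans hst)); norm_num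
  have hτst : r * s / 4 ≤ r * t / 4 := by
    have := mul_le_mul_of_nonneg_left hst hrpos.le
    linarith
  set a := ⌊r * s / 4⌋₊ with ha
  set b := ⌊r * t / 4⌋₊ with hb
  clear_value a b
  have hab : a ≤ b := by rw [ha, hb]; exact Nat.floor_mono hτst
  have has : (a : ℝ) ≤ r * s / 4 := by rw [ha]; exact Nat.floor_le hτs0
  have has1 : r * s / 4 < (a : ℝ) + 1 := by rw [ha]; exact Nat.lt_floor_add_one _
  have hbs : (b : ℝ) ≤ r * t / 4 := by rw [hb]; exact Nat.floor_le hτt0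
  have hbs1 : r * t / 4 < (b : ℝ) + 1 := by rw [hb]; exact Nat.lt_floor_add_one _
  set D : ℝ := r * t / 4 - r * s / 4 with hD
  clear_value D
  have hD0 : 0 ≤ D := by rw [hD]; linarith
  have hDts : 4 * D / r = t - s := by rw [hD]; field_simp
  -- boundedness of increments
  have hbd : ∀ k l : ℕ, ∀ ω, |Z l ω - Z k ω| ≤ 1 := by
    intro k l ω
    have h1 := hZ01 l ω
    have h2 := hZ01 k ω
    simp only [Set.mem_Icc] at h1 h2
    rw [abs_le]; constructor <;> linarith
  -- integrability helper
  have hIntAbsPow : ∀ (f : Ω → ℝ), Measurable f → ∀ (B : ℝ), (∀ ω, |f ω| ≤ B) →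
      Integrable (fun ω => |f ω| ^ (2 * m)) μ := by
    intro f hf B hB
    refine ⟨(hf.abs.pow_const _).aestronglyMeasurable, ?_⟩
    apply MeasureTheory.HasFiniteIntegral.of_bounded (C := B ^ (2 * m))
    filter_upwards with ω
    rw [Real.norm_eq_abs, abs_of_nonneg (by positivity)]
    exact pow_le_pow_left₀ (abs_nonneg _) (hB ω) _
  -- bound for a single-step term with a small coefficient
  have hcterm : ∀ (k : ℕ) (c : ℝ), 0 ≤ c → c ≤ 1 → c ≤ D →
      ∫ ω, |c * (Z (k + 1) ω - Z k ω)| ^ (2 * m) ∂μ ≤ C * (t - s) ^ m := by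
    intro k c hc0 hc1 hcD
    have hmomk := hmom k (k + 1) (Nat.le_succ k)
    have hcast : 4 * (((k + 1 : ℕ) : ℝ) - (k : ℝ)) / r = 4 / r := by push_cast; ring
    rw [hcast] at hmomk
    have h4r : (0 : ℝ) ≤ 4 / r := by
      apply div_nonneg _ hrpos.le; norm_num
    calc ∫ ω, |c * (Z (k + 1) ω - Z k ω)| ^ (2 * m) ∂μ
        = ∫ ω, c ^ (2 * m) * |Z (k + 1) ω - Z k ω| ^ (2 * m) ∂μ := by
          congr 1; funext ω; rw [abs_mul, mul_pow, abs_of_nonneg hc0]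
      _ = c ^ (2 * m) * ∫ ω, |Z (k + 1) ω - Z k ω| ^ (2 * m) ∂μ :=
          integral_const_mul _ _
      _ ≤ c ^ (2 * m) * (C * (4 / r) ^ m) :=
          mul_le_mul_of_nonneg_left hmomk (by positivity)
      _ = C * (c ^ 2 * (4 / r)) ^ m := by rw [pow_mul, mul_pow (c ^ 2) (4 / r) m]; ring
      _ ≤ C * (D * (4 / r)) ^ m := by
          apply mul_le_mul_of_nonneg_left _ hC.le
          apply pow_le_pow_left₀ (by positivity) _
          have hc2 : c ^ 2 ≤ D := by nlinarith
          exact mul_le_mul_of_nonneg_right hc2 h4r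
      _ = C * (t - s) ^ m := by rw [← hDts]; ring_nf
  rcases eq_or_lt_of_le hab with hab' | hab'
  · -- same grid cell : a = b
    have hD1 : D < 1 := by
      rw [hD]
      have : (a : ℝ) = (b : ℝ) := by exact_mod_cast hab'
      linarith
    have hdiff : ∀ ω, interp n Z t ω - interp n Z s ω = D * (Z (a + 1) ω - Z a ω) := by
      intro ω
      simp only [interp]
      rw [← hr, ← ha, ← hb, ← hab', hD]
      ring
    have hfinal : ∫ ω, |interp n Z t ω - interp n Z s ω| ^ (2 * m) ∂μ ≤ C * (t - s) ^ m := by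
      calc ∫ ω, |interp n Z t ω - interp n Z s ω| ^ (2 * m) ∂μ
          = ∫ ω, |D * (Z (a + 1) ω - Z a ω)| ^ (2 * m) ∂μ := by
            congr 1; funext ω; rw [hdiff ω]
        _ ≤ C * (t - s) ^ m := hcterm a D hD0 hD1.le le_rfl
    have h1 : (1 : ℝ) ≤ 3 ^ (2 * m + 1) := one_le_pow₀ (by norm_num)
    have h2 : (0 : ℝ) ≤ (t - s) ^ m := pow_nonneg (by linarith) m
    have h3 : C * (t - s) ^ m ≤ 3 ^ (2 * m + 1) * C * (t - s) ^ m :=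
      mul_le_mul_of_nonneg_right (le_mul_of_one_le_left hC.le h1) h2
    linarith
  · -- a < b
    have hab1 : a + 1 ≤ b := hab'
    have hba1 : (a : ℝ) + 1 ≤ (b : ℝ) := by exact_mod_cast hab1
    set c1 : ℝ := r * t / 4 - (b : ℝ) with hc1
    set c2 : ℝ := (a : ℝ) + 1 - r * s / 4 with hc2
    clear_value c1 c2
    have hc1_0 : 0 ≤ c1 := by rw [hc1]; linarith
    have hc1_1 : c1 ≤ 1 := by rw [hc1]; linarith
    have hc1_D : c1 ≤ D := by rw [hc1, hD]; linarith
    have hc2_0 : 0 ≤ c2 := by rw [hc2]; linarith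
    have hc2_1 : c2 ≤ 1 := by rw [hc2]; linarith
    have hc2_D : c2 ≤ D := by rw [hc2, hD]; linarith
    have hdecomp : ∀ ω, interp n Z t ω - interp n Z s ω =
        c1 * (Z (b + 1) ω - Z b ω) + (Z b ω - Z (a + 1) ω)
          + c2 * (Z (a + 1) ω - Z a ω) := by
      intro ω
      simp only [interp]
      rw [← hr, ← ha, ← hb, hc1, hc2]
      ring
    -- integrability
    have hX : Integrable (fun ω => |c1 * (Z (b + 1) ω - Z b ω)| ^ (2 * m)) μ := by
      apply hIntAbsPow _ (((hZm _).sub (hZm _)).const_mul c1) 1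
      intro ω
      rw [abs_mul]
      calc |c1| * |Z (b + 1) ω - Z b ω| ≤ 1 * 1 := by
            apply mul_le_mul _ (hbd _ _ ω) (abs_nonneg _) (by norm_num)
            rw [abs_of_nonneg hc1_0]; exact hc1_1
        _ = 1 := by norm_num
    have hY : Integrable (fun ω => |Z b ω - Z (a + 1) ω| ^ (2 * m)) μ :=
      hIntAbsPow _ ((hZm _).sub (hZm _)) 1 (fun ω => hbd _ _ ω)
    have hW : Integrable (fun ω => |c2 * (Z (a + 1) ω - Z a ω)| ^ (2 * m)) μ := by
      apply hIntAbsPow _ (((hZm _).sub (hZm _)).const_mul c2) 1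
      intro ω
      rw [abs_mul]
      calc |c2| * |Z (a + 1) ω - Z a ω| ≤ 1 * 1 := by
            apply mul_le_mul _ (hbd _ _ ω) (abs_nonneg _) (by norm_num)
            rw [abs_of_nonneg hc2_0]; exact hc2_1
        _ = 1 := by norm_num
    have hLmeas : Measurable (fun ω => interp n Z t ω - interp n Z s ω) := by
      simp only [interp]
      apply Measurable.sub <;>
        exact (hZm _).add (Measurable.const_mul ((hZm _).sub (hZm _)) _)
    have hL : Integrable (fun ω => |interp n Z t ω - interp n Z s ω| ^ (2 * m)) μ := by
      apply hIntAbsPow _ hLmeas 3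
      · intro ω
        rw [hdecomp ω]
        have h1 := hbd b (b + 1) ω
        have h2 := hbd (a + 1) b ω
        have h3 := hbd a (a + 1) ω
        have := abs_add_three (c1 * (Z (b + 1) ω - Z b ω)) (Z b ω - Z (a + 1) ω)
          (c2 * (Z (a + 1) ω - Z a ω))
        rw [abs_mul, abs_mul, abs_of_nonneg hc1_0, abs_of_nonneg hc2_0] at this
        nlinarith [abs_nonneg (Z (b+1) ω - Z b ω), abs_nonneg (Z (a+1) ω - Z a ω)]
    -- the middle term
    have hYbound : ∫ ω, |Z b ω - Z (a + 1) ω| ^ (2 * m) ∂μ ≤ C * (t - s) ^ m := by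
      have hmomY := hmom (a + 1) b hab1
      refine hmomY.trans ?_
      have hbase0 : (0 : ℝ) ≤ 4 * ((b : ℝ) - ((a + 1 : ℕ) : ℝ)) / r := by
        apply div_nonneg _ hrpos.le
        push_cast; nlinarith
      have hbase : 4 * ((b : ℝ) - ((a + 1 : ℕ) : ℝ)) / r ≤ t - s := by
        rw [← hDts]
        have hle : 4 * ((b : ℝ) - ((a + 1 : ℕ) : ℝ)) ≤ 4 * D := by
          push_cast; rw [hD]; nlinarith
        exact div_le_div_of_nonneg_right hle hrpos.le
      exact mul_le_mul_of_nonneg_left (pow_le_pow_left₀ hbase0 hbase m) hC.le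
    calc ∫ ω, |interp n Z t ω - interp n Z s ω| ^ (2 * m) ∂μ
        ≤ ∫ ω, 3 ^ (2 * m) * (|c1 * (Z (b + 1) ω - Z b ω)| ^ (2 * m)
            + |Z b ω - Z (a + 1) ω| ^ (2 * m)
            + |c2 * (Z (a + 1) ω - Z a ω)| ^ (2 * m)) ∂μ := by
          apply integral_mono hL (((hX.add hY).add hW).const_mul _)
          intro ω
          dsimp only
          rw [hdecomp ω]
          exact abs_pow_add_three (2 * m) _ _ _
      _ = 3 ^ (2 * m) * ((∫ ω, |c1 * (Z (b + 1) ω - Z b ω)| ^ (2 * m) ∂μ)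
            + (∫ ω, |Z b ω - Z (a + 1) ω| ^ (2 * m) ∂μ)
            + (∫ ω, |c2 * (Z (a + 1) ω - Z a ω)| ^ (2 * m) ∂μ)) := by
          have hXY : Integrable (fun ω => |c1 * (Z (b + 1) ω - Z b ω)| ^ (2 * m)
              + |Z b ω - Z (a + 1) ω| ^ (2 * m)) μ := hX.add hY
          rw [integral_const_mul, integral_add hXY hW, integral_add hX hY]
      _ ≤ 3 ^ (2 * m) * (C * (t - s) ^ m + C * (t - s) ^ m + C * (t - s) ^ m) := by
          apply mul_le_mul_of_nonneg_left _ (by positivity)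
          have t1 := hcterm b c1 hc1_0 hc1_1 hc1_D
          have t3 := hcterm a c2 hc2_0 hc2_1 hc2_D
          linarith
      _ = 3 ^ (2 * m + 1) * C * (t - s) ^ m := by ring
end
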